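/- Fix β > 0, R > 0, p ≥ 0, and l > 0. With h_n as above for a sequence μ with ‖μ‖_β ≤ R, there exists a constant c₀ > 0 depending only on l, β, R, p such that for all sufficiently large n, h_n(α) ≤ l for every α ∈ (0, β − c₀/log n]. -/

import Mathlib

set_option maxHeartbeats 1000000

/-- Lemma 2.1(i): for μ in a Sobolev ball, there is c₀ > 0 (depending only on
l, β, R, p) such that for all large n, h_n(α) ≤ l whenever 0 < α ≤ β − c₀/log n. -/
theorem stmt_8 (β R p l : ℝ) (hβ : 0 < β) (hR : 0 < R) (hp : 0 ≤ p) (hl : 0 < l) :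
    ∃ c₀ > 0, ∃ N : ℝ, ∀ (μ : ℕ → ℝ),
      Summable (fun i : ℕ => ((i : ℝ) + 1) ^ (2 * β) * (μ (i + 1)) ^ 2) →
      (∑' i : ℕ, ((i : ℝ) + 1) ^ (2 * β) * (μ (i + 1)) ^ 2) ≤ R ^ 2 →
      ∀ n ≥ N, ∀ α : ℝ, 0 < α → α ≤ β - c₀ / Real.log n →
        (1 + 2 * α + 2 * p) / (n ^ (1 / (1 + 2 * α + 2 * p)) * Real.log n) *
          ∑' i : ℕ, n ^ 2 * ((i : ℝ) + 1) ^ (1 + 2 * α) * (μ (i + 1)) ^ 2 *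
            Real.log ((i : ℝ) + 1) / ((((i : ℝ) + 1) ^ (1 + 2 * α + 2 * p) + n) ^ 2)
        ≤ l := by
  set sb : ℝ := 1 + 2 * β + 2 * p with hsb_def
  have hsb1 : 1 ≤ sb := by simp only [hsb_def]; nlinarith
  have hsbpos : 0 < sb := lt_of_lt_of_le one_pos hsb1
  set K : ℝ := 1 / (2 * β) with hK_def
  have hK : 0 < K := by positivity
  set c₀ : ℝ := sb * (1 + max 0 (Real.log (4 * R ^ 2 / l))) with hc_def
  have hmax0 : 0 ≤ max 0 (Real.log (4 * R ^ 2 / l)) := le_max_left _ _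
  have hc₀ : 0 < c₀ := by apply mul_pos hsbpos; linarith
  have hcsb : c₀ / sb = 1 + max 0 (Real.log (4 * R ^ 2 / l)) := by
    rw [hc_def, mul_div_cancel_left₀ _ hsbpos.ne']
  have hexp : Real.exp (-(c₀ / sb)) ≤ l / (4 * R ^ 2) := by
    have h1 : Real.log (4 * R ^ 2 / l) ≤ c₀ / sb := by
      rw [hcsb]; linarith [le_max_right 0 (Real.log (4 * R ^ 2 / l))]
    calc Real.exp (-(c₀ / sb)) ≤ Real.exp (-(Real.log (4 * R ^ 2 / l))) :=
          Real.exp_le_exp.2 (by linarith)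
      _ = l / (4 * R ^ 2) := by
          rw [Real.exp_neg, Real.exp_log (by positivity), inv_div]
  refine ⟨c₀, hc₀, Real.exp (sb * K + c₀), ?_⟩
  intro μ hsum hμ n hn α hα hαβ
  have hnpos : 0 < n := lt_of_lt_of_le (Real.exp_pos _) hn
  set L : ℝ := Real.log n with hL_def
  have hLge : sb * K + c₀ ≤ L := (Real.le_log_iff_exp_le hnpos).2 hn
  have hsbK : 0 < sb * K := mul_pos hsbpos hK
  have hL0 : 0 < L := by linarith
  have hn1 : 1 ≤ n := by
    calc (1:ℝ) = Real.exp 0 := Real.exp_zero.symm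
      _ ≤ Real.exp (sb * K + c₀) := Real.exp_le_exp.2 (by linarith)
      _ ≤ n := hn
  have hcL : 0 < c₀ / L := div_pos hc₀ hL0
  have hαβ' : α ≤ β := by linarith
  set s : ℝ := 1 + 2 * α + 2 * p with hs_def
  have hs1 : 1 < s := by simp only [hs_def]; linarith
  have hs0 : 0 < s := by linarith
  have hssb : s ≤ sb := by simp only [hs_def, hsb_def]; linarith
  set e0 : ℝ := 1 + 2 * α - 2 * β with he0_def
  have he0s : e0 - s = -(2 * β + 2 * p) := by simp only [he0_def, hs_def]; ring
  set Q : ℝ := n ^ (1 / s) with hQ_def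
  have hQpos : 0 < Q := Real.rpow_pos_of_pos hnpos _
  set A : ℝ := max (n ^ (e0 / s)) 1 with hA_def
  have hA1 : (1:ℝ) ≤ A := le_max_right _ _
  have hA0 : (0:ℝ) ≤ A := by linarith
  have hLsK : 0 < L / s + K := by positivity
  -- pointwise bound
  have key : ∀ i : ℕ, n ^ 2 * ((i : ℝ) + 1) ^ (1 + 2 * α) * (μ (i + 1)) ^ 2 *
        Real.log ((i : ℝ) + 1) / ((((i : ℝ) + 1) ^ s + n) ^ 2)
      ≤ (((i : ℝ) + 1) ^ (2 * β) * (μ (i + 1)) ^ 2) * (A * (L / s + K)) := by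
    intro i
    set x : ℝ := (i : ℝ) + 1 with hx_def
    have hx1 : (1:ℝ) ≤ x := by
      simp only [hx_def]; linarith [Nat.cast_nonneg (α := ℝ) i]
    have hxpos : 0 < x := lt_of_lt_of_le one_pos hx1
    have hlogx : 0 ≤ Real.log x := Real.log_nonneg hx1
    have hxs : 0 < x ^ s := Real.rpow_pos_of_pos hxpos _
    have hden : 0 < (x ^ s + n) ^ 2 := by positivity
    have hxe0 : 0 ≤ x ^ e0 := Real.rpow_nonneg hxpos.le _
    have hF : x ^ e0 * Real.log x * (n ^ 2 / (x ^ s + n) ^ 2) ≤ A * (L / s + K) := by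
      rcases le_or_gt (x ^ s) n with hcase | hcase
      · -- small x : x^s ≤ n
        have h1 : n ^ 2 / (x ^ s + n) ^ 2 ≤ 1 := by
          rw [div_le_one hden]; nlinarith [hxs.le]
        have h2 : Real.log x ≤ L / s := by
          have h := Real.log_le_log hxs hcase
          rw [Real.log_rpow hxpos] at h
          rw [le_div_iff₀ hs0]; linarith
        have h3 : x ^ e0 ≤ A := by
          rcases le_or_gt 0 e0 with he | he
          · have hxe : x ^ e0 = (x ^ s) ^ (e0 / s) := by
              rw [← Real.rpow_mul hxpos.le]
              congr 1
              field_simp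
            rw [hxe]
            exact le_trans (Real.rpow_le_rpow hxs.le hcase (by positivity)) (le_max_left _ _)
          · exact le_trans (Real.rpow_le_one_of_one_le_of_nonpos hx1 he.le) hA1
        calc x ^ e0 * Real.log x * (n ^ 2 / (x ^ s + n) ^ 2)
            ≤ x ^ e0 * Real.log x * 1 :=
              mul_le_mul_of_nonneg_left h1 (by positivity)
          _ = x ^ e0 * Real.log x := mul_one _
          _ ≤ A * (L / s) := mul_le_mul h3 h2 hlogx hA0
          _ ≤ A * (L / s + K) := mul_le_mul_of_nonneg_left (le_add_of_nonneg_right hK.le) hA0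
      · -- large x : n < x^s
        have hxJ : Q ≤ x := by
          have h0 : n ^ (1 / s) ≤ (x ^ s) ^ (1 / s) :=
            Real.rpow_le_rpow hnpos.le hcase.le (by positivity)
          rwa [← Real.rpow_mul hxpos.le, mul_one_div, div_self hs0.ne', Real.rpow_one] at h0
        have h1 : n ^ 2 / (x ^ s + n) ^ 2 ≤ n / x ^ s := by
          rw [div_le_div_iff₀ hden hxs]
          have hexpand : (x ^ s + n) ^ 2 = x ^ s * x ^ s + 2 * (x ^ s * n) + n * n := by ring
          calc n ^ 2 * x ^ s = n * (x ^ s * n) := by ring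
            _ ≤ n * (x ^ s + n) ^ 2 := by
                apply mul_le_mul_of_nonneg_left _ hnpos.le
                rw [hexpand]
                have h5 : 0 ≤ x ^ s * x ^ s := mul_nonneg hxs.le hxs.le
                have h6 : 0 ≤ x ^ s * n := mul_nonneg hxs.le hnpos.le
                have h7 : 0 ≤ n * n := mul_nonneg hnpos.le hnpos.le
                linarith
        have hu1 : (1:ℝ) ≤ x / Q := (one_le_div hQpos).2 hxJ
        set u : ℝ := x / Q with hu_def
        have hupos : 0 < u := lt_of_lt_of_le one_pos hu1
        have hxu : x = Q * u := by rw [hu_def]; field_simp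
        have hlogQ : Real.log Q = L / s := by
          rw [hQ_def, Real.log_rpow hnpos]; ring
        have huc : u ^ (e0 - s) ≤ 1 :=
          Real.rpow_le_one_of_one_le_of_nonpos hu1 (by rw [he0s]; linarith)
        have hulog : u ^ (e0 - s) * Real.log u ≤ K := by
          have h2 : Real.log u ≤ u ^ (2 * β) / (2 * β) :=
            Real.log_le_rpow_div hupos.le (by positivity)
          have h3 : u ^ (e0 - s) * (u ^ (2 * β) / (2 * β)) = u ^ (e0 - s + 2 * β) / (2 * β) := by
            rw [Real.rpow_add hupos]; ring
          have h4 : u ^ (e0 - s + 2 * β) ≤ 1 :=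
            Real.rpow_le_one_of_one_le_of_nonpos hu1 (by rw [he0s]; linarith)
          calc u ^ (e0 - s) * Real.log u
              ≤ u ^ (e0 - s) * (u ^ (2 * β) / (2 * β)) :=
                mul_le_mul_of_nonneg_left h2 (Real.rpow_nonneg hupos.le _)
            _ = u ^ (e0 - s + 2 * β) / (2 * β) := h3
            _ ≤ 1 / (2 * β) := (div_le_div_iff_of_pos_right (by positivity)).2 h4
            _ = K := by rw [hK_def]
        have hQc : 0 ≤ Q ^ (e0 - s) := Real.rpow_nonneg hQpos.le _
        have hxc : x ^ (e0 - s) * Real.log x ≤ Q ^ (e0 - s) * (L / s + K) := by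
          have hsplit : x ^ (e0 - s) = Q ^ (e0 - s) * u ^ (e0 - s) := by
            rw [hxu, Real.mul_rpow hQpos.le hupos.le]
          have hlogx' : Real.log x = Real.log Q + Real.log u := by
            rw [hxu, Real.log_mul hQpos.ne' hupos.ne']
          rw [hsplit, hlogx', hlogQ]
          have hLs0 : 0 ≤ L / s := by positivity
          have huc0 : 0 ≤ u ^ (e0 - s) := Real.rpow_nonneg hupos.le _
          have e2 : u ^ (e0 - s) * (L / s + Real.log u) ≤ L / s + K := by
            have e3 : u ^ (e0 - s) * (L / s + Real.log u)
                = u ^ (e0 - s) * (L / s) + u ^ (e0 - s) * Real.log u := by ring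
            rw [e3]
            have e1 : u ^ (e0 - s) * (L / s) ≤ L / s := mul_le_of_le_one_left hLs0 huc
            linarith
          calc Q ^ (e0 - s) * u ^ (e0 - s) * (L / s + Real.log u)
              = Q ^ (e0 - s) * (u ^ (e0 - s) * (L / s + Real.log u)) := by ring
            _ ≤ Q ^ (e0 - s) * (L / s + K) := mul_le_mul_of_nonneg_left e2 hQc
        have hQe : n * Q ^ (e0 - s) = n ^ (e0 / s) := by
          rw [hQ_def, ← Real.rpow_mul hnpos.le]
          nth_rewrite 1 [← Real.rpow_one n]
          rw [← Real.rpow_add hnpos]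
          congr 1
          field_simp
          ring
        have hxe : x ^ e0 * Real.log x * (n / x ^ s) = n * (x ^ (e0 - s) * Real.log x) := by
          clear_value x s e0
          rw [Real.rpow_sub hxpos]
          ring
        calc x ^ e0 * Real.log x * (n ^ 2 / (x ^ s + n) ^ 2)
            ≤ x ^ e0 * Real.log x * (n / x ^ s) :=
              mul_le_mul_of_nonneg_left h1 (by positivity)
          _ = n * (x ^ (e0 - s) * Real.log x) := hxe
          _ ≤ n * (Q ^ (e0 - s) * (L / s + K)) := mul_le_mul_of_nonneg_left hxc hnpos.le
          _ = n ^ (e0 / s) * (L / s + K) := by rw [← mul_assoc, hQe]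
          _ ≤ A * (L / s + K) :=
              mul_le_mul_of_nonneg_right (le_max_left _ _) hLsK.le
    have heq : n ^ 2 * x ^ (1 + 2 * α) * (μ (i + 1)) ^ 2 * Real.log x / ((x ^ s + n) ^ 2)
        = (x ^ (2 * β) * (μ (i + 1)) ^ 2) * (x ^ e0 * Real.log x * (n ^ 2 / (x ^ s + n) ^ 2)) := by
      have hsplit : x ^ (1 + 2 * α) = x ^ (2 * β) * x ^ e0 := by
        rw [← Real.rpow_add hxpos]
        congr 1
        rw [he0_def]; ring
      rw [hsplit]; ring
    rw [heq]
    exact mul_le_mul_of_nonneg_left hF (by positivity)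
  -- summability and tsum bound
  have hnonneg : ∀ i : ℕ, 0 ≤ n ^ 2 * ((i : ℝ) + 1) ^ (1 + 2 * α) * (μ (i + 1)) ^ 2 *
      Real.log ((i : ℝ) + 1) / ((((i : ℝ) + 1) ^ s + n) ^ 2) := by
    intro i
    have h1 : (1:ℝ) ≤ (i : ℝ) + 1 := by linarith [Nat.cast_nonneg (α := ℝ) i]
    have h2 : 0 ≤ Real.log ((i : ℝ) + 1) := Real.log_nonneg h1
    have h3 : (0:ℝ) < (i : ℝ) + 1 := by linarith
    have h4 : (0:ℝ) ≤ ((i : ℝ) + 1) ^ (1 + 2 * α) := Real.rpow_nonneg h3.le _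
    apply div_nonneg _ (by positivity)
    positivity
  have hsum2 : Summable (fun i : ℕ =>
      (((i : ℝ) + 1) ^ (2 * β) * (μ (i + 1)) ^ 2) * (A * (L / s + K))) := hsum.mul_right _
  have hsumA : Summable (fun i : ℕ => n ^ 2 * ((i : ℝ) + 1) ^ (1 + 2 * α) * (μ (i + 1)) ^ 2 *
      Real.log ((i : ℝ) + 1) / ((((i : ℝ) + 1) ^ s + n) ^ 2)) :=
    Summable.of_nonneg_of_le hnonneg key hsum2
  have htsum : (∑' i : ℕ, n ^ 2 * ((i : ℝ) + 1) ^ (1 + 2 * α) * (μ (i + 1)) ^ 2 *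
      Real.log ((i : ℝ) + 1) / ((((i : ℝ) + 1) ^ s + n) ^ 2)) ≤ R ^ 2 * (A * (L / s + K)) := by
    calc (∑' i : ℕ, n ^ 2 * ((i : ℝ) + 1) ^ (1 + 2 * α) * (μ (i + 1)) ^ 2 *
          Real.log ((i : ℝ) + 1) / ((((i : ℝ) + 1) ^ s + n) ^ 2))
        ≤ ∑' i : ℕ, (((i : ℝ) + 1) ^ (2 * β) * (μ (i + 1)) ^ 2) * (A * (L / s + K)) :=
          Summable.tsum_le_tsum key hsumA hsum2
      _ = (∑' i : ℕ, ((i : ℝ) + 1) ^ (2 * β) * (μ (i + 1)) ^ 2) * (A * (L / s + K)) :=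
          tsum_mul_right
      _ ≤ R ^ 2 * (A * (L / s + K)) := mul_le_mul_of_nonneg_right hμ (by positivity)
  -- final arithmetic
  have hQL : 0 < Q * L := mul_pos hQpos hL0
  rw [div_mul_eq_mul_div, div_le_iff₀ hQL]
  have hexpE : ∀ y : ℝ, y * L ≤ -(c₀ / sb) → n ^ y ≤ l / (4 * R ^ 2) := by
    intro y hy
    rw [Real.rpow_def_of_pos hnpos]
    refine le_trans (Real.exp_le_exp.2 ?_) hexp
    rw [← hL_def]
    linarith [hy]
  have h2a : n ^ ((e0 - 1) / s) ≤ l / (4 * R ^ 2) := by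
    apply hexpE
    have hE0 : (e0 - 1) * L ≤ -(2 * c₀) := by
      have ha : (α - β) * L ≤ (-(c₀ / L)) * L :=
        mul_le_mul_of_nonneg_right (by linarith) hL0.le
      have hb : (-(c₀ / L)) * L = -c₀ := by field_simp
      rw [hb] at ha
      have hc : (e0 - 1) * L = 2 * ((α - β) * L) := by rw [he0_def]; ring
      rw [hc]; linarith
    have hE2 : (e0 - 1) / s * L = (e0 - 1) * L / s := by ring
    rw [hE2]
    calc (e0 - 1) * L / s ≤ -(2 * c₀) / s := (div_le_div_iff_of_pos_right hs0).2 hE0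
      _ ≤ -(c₀ / sb) := by
          rw [neg_div, neg_le_neg_iff, div_le_div_iff₀ hsbpos hs0]
          nlinarith
  have h2b : n ^ (-(1 / s)) ≤ l / (4 * R ^ 2) := by
    apply hexpE
    have h : c₀ / sb ≤ L / s := by
      rw [div_le_div_iff₀ hsbpos hs0]
      nlinarith
    have h' : -(1 / s) * L = -(L / s) := by ring
    rw [h']
    linarith
  have hA_le : A ≤ l / (4 * R ^ 2) * Q := by
    apply max_le
    · have h1 : n ^ (e0 / s) = n ^ ((e0 - 1) / s) * Q := by
        rw [hQ_def, ← Real.rpow_add hnpos]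
        congr 1
        field_simp
        ring
      rw [h1]
      exact mul_le_mul_of_nonneg_right h2a hQpos.le
    · calc (1:ℝ) = n ^ (-(1 / s) + 1 / s) := by
            rw [neg_add_cancel, Real.rpow_zero]
        _ = n ^ (-(1 / s)) * Q := by rw [Real.rpow_add hnpos, hQ_def]
        _ ≤ l / (4 * R ^ 2) * Q := mul_le_mul_of_nonneg_right h2b hQpos.le
  have hAQ : 4 * R ^ 2 * A ≤ l * Q := by
    calc 4 * R ^ 2 * A = A * (4 * R ^ 2) := by ring
      _ ≤ l / (4 * R ^ 2) * Q * (4 * R ^ 2) :=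
          mul_le_mul_of_nonneg_right hA_le (by positivity)
      _ = l * Q := by field_simp
  have hLK : L + s * K ≤ 2 * L := by
    have h1 : s * K ≤ sb * K := mul_le_mul_of_nonneg_right hssb hK.le
    linarith
  calc s * (∑' i : ℕ, n ^ 2 * ((i : ℝ) + 1) ^ (1 + 2 * α) * (μ (i + 1)) ^ 2 *
        Real.log ((i : ℝ) + 1) / ((((i : ℝ) + 1) ^ s + n) ^ 2))
      ≤ s * (R ^ 2 * (A * (L / s + K))) := mul_le_mul_of_nonneg_left htsum hs0.le
    _ = R ^ 2 * A * (s * (L / s + K)) := by ring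
    _ = R ^ 2 * A * (L + s * K) := by
        congr 1
        field_simp
    _ ≤ l * (Q * L) := by
        nlinarith [mul_le_mul_of_nonneg_right hAQ hL0.le,
          mul_le_mul_of_nonneg_left hLK (show (0:ℝ) ≤ R ^ 2 * A by positivity),
          mul_nonneg (mul_nonneg hl.le hQpos.le) hL0.le]
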